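/- There exists a triangle ABC with angles ∠A = 12°, ∠C = 36°, ∠B = 132° in which the external angle bisectors from A and from B both have length equal to side AB. -/

import Mathlib

open EuclideanGeometry Real

noncomputable section

/-- The Euclidean plane. -/
abbrev Pt : Type := EuclideanSpace ℝ (Fin 2)

namespace BottemaAux

open Complex InnerProductGeometry

/-- `e x = exp (x * I)`. -/
noncomputable def e (x : ℝ) : ℂ := Complex.exp (x * Complex.I)

lemma e_add (x y : ℝ) : e (x + y) = e x * e y := by
  rw [e, e, e, ← Complex.exp_add]
  push_cast
  ring_nf

lemma e_ne (x : ℝ) : e x ≠ 0 := Complex.exp_ne_zero _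

lemma norm_e (x : ℝ) : ‖e x‖ = 1 := by
  simp [e, Complex.norm_exp_ofReal_mul_I]

lemma e_def (x : ℝ) : e x = (Real.cos x : ℂ) + (Real.sin x : ℂ) * Complex.I := by
  rw [e, Complex.exp_mul_I]; push_cast; ring

lemma e_zero : e 0 = 1 := by simp [e]

lemma e_pi : e π = -1 := by rw [e, Complex.exp_pi_mul_I]

lemma e_pi_div_two : e (π / 2) = Complex.I := by
  rw [e_def]; simp

lemma e_sub_pi (x : ℝ) : e (x - π) = - e x := by
  have h : e x = e (x - π) * e π := by rw [← e_add]; ring_nf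
  rw [h, e_pi]; ring

lemma angle_e_e {x y : ℝ} (h1 : -π < x - y) (h2 : x - y ≤ π) :
    InnerProductGeometry.angle (e x) (e y) = |x - y| := by
  rw [e, e, Complex.angle_exp_exp, (toIocMod_eq_self _).mpr]
  constructor
  · exact h1
  · linarith

lemma angle_smul_e {ρ₁ ρ₂ : ℝ} (hρ₁ : 0 < ρ₁) (hρ₂ : 0 < ρ₂) {x y : ℝ}
    (h1 : -π < x - y) (h2 : x - y ≤ π) :
    InnerProductGeometry.angle ((ρ₁ : ℂ) * e x) ((ρ₂ : ℂ) * e y) = |x - y| := by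
  rw [← Complex.real_smul, ← Complex.real_smul, angle_smul_left_of_pos _ _ hρ₁,
    angle_smul_right_of_pos _ _ hρ₂, angle_e_e h1 h2]

lemma angle_eq (a b c : ℂ) : ∠ a b c = InnerProductGeometry.angle (a - b) (c - b) := rfl

/-- `2 cos θ · e θ = e 2θ + 1`. -/
lemma two_cos_mul (θ : ℝ) : ((2 * Real.cos θ : ℝ) : ℂ) * e θ = e (2 * θ) + 1 := by
  have h1 : ((2 * Real.cos θ : ℝ) : ℂ) = e θ + e (-θ) := by
    rw [e_def, e_def, Real.cos_neg, Real.sin_neg]; push_cast; ring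
  have h2 : e (2 * θ) = e θ * e θ := by rw [← e_add]; ring_nf
  have h3 : e (-θ) * e θ = 1 := by rw [← e_add]; simp [e_zero]
  rw [h1, h2]
  linear_combination h3

/-- `e (-2θ) - 1 = -2 sin θ · e (π/2 - θ)`. -/
lemma exp_neg_sub_one (θ : ℝ) :
    e (-(2 * θ)) - 1 = ((-2 * Real.sin θ : ℝ) : ℂ) * e (π / 2 - θ) := by
  have f1 : e (-(2 * θ)) = e (-θ) * e (-θ) := by rw [← e_add]; ring_nf
  have f2 : (1 : ℂ) = e θ * e (-θ) := by rw [← e_add]; simp [e_zero]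
  have f3 : e (π / 2 - θ) = Complex.I * e (-θ) := by
    have h : e (π / 2 - θ) = e (π / 2) * e (-θ) := by rw [← e_add]; ring_nf
    rw [h, e_pi_div_two]
  have sinid : e (-θ) - e θ = ((-2 * Real.sin θ : ℝ) : ℂ) * Complex.I := by
    rw [e_def, e_def, Real.cos_neg, Real.sin_neg]; push_cast; ring
  rw [f1, f3]
  calc e (-θ) * e (-θ) - 1 = (e (-θ) - e θ) * e (-θ) := by rw [f2]; ring
    _ = ((-2 * Real.sin θ : ℝ) : ℂ) * (Complex.I * e (-θ)) := by rw [sinid]; ring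

end BottemaAux

open BottemaAux

theorem bottema_example :
    ∃ A B C A₁ B₁ : Pt,
      AffineIndependent ℝ ![A, B, C] ∧
      ∠ B A C = π / 15 ∧ ∠ A C B = π / 5 ∧ ∠ A B C = 11 * π / 15 ∧
      A₁ ∈ affineSpan ℝ ({B, C} : Set Pt) ∧
      ∠ B A A₁ + ∠ C A A₁ = π ∧
      B₁ ∈ affineSpan ℝ ({A, C} : Set Pt) ∧
      ∠ A B B₁ + ∠ C B B₁ = π ∧
      dist A A₁ = dist A B ∧ dist B B₁ = dist A B := by
  classical
  have pi_pos := Real.pi_pos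
  set a1 : ℝ := Real.sin (π / 15) with ha1_def
  set b5 : ℝ := Real.sin (π / 5) with hb5_def
  set c4 : ℝ := Real.sin (4 * π / 15) with hc4_def
  have hb5 : 0 < b5 := by
    rw [hb5_def]; apply Real.sin_pos_of_pos_of_lt_pi <;> linarith
  have hc4 : 0 < c4 := by
    rw [hc4_def]; apply Real.sin_pos_of_pos_of_lt_pi <;> linarith
  have ha1 : 0 < a1 := by
    rw [ha1_def]; apply Real.sin_pos_of_pos_of_lt_pi <;> linarith
  have ha1C : (a1 : ℂ) ≠ 0 := by exact_mod_cast ha1.ne'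
  have hc4C : (c4 : ℂ) ≠ 0 := by exact_mod_cast hc4.ne'
  -- points in ℂ
  set A : ℂ := 0 with hA
  set B : ℂ := (b5 : ℂ) with hB
  set C : ℂ := (c4 : ℂ) * e (π / 15) with hC
  set A₁ : ℂ := (b5 : ℂ) * e (-(7 * π / 15)) with hA₁
  set B₁ : ℂ := ((2 * Real.cos (π / 15) * b5 : ℝ) : ℂ) * e (π / 15) with hB₁
  -- vector identities
  have hBA : B - A = (b5 : ℂ) * e 0 := by rw [hA, hB, e_zero]; ring
  have hCA : C - A = (c4 : ℂ) * e (π / 15) := by rw [hA, hC]; ring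
  have hCB : C - B = (a1 : ℂ) * e (4 * π / 15) := by
    have hb : b5 = c4 * Real.cos (π / 15) - Real.cos (4 * π / 15) * a1 := by
      rw [hb5_def, hc4_def, ha1_def, ← Real.sin_sub]
      congr 1
      ring
    have hb' : (b5 : ℂ)
        = (c4 : ℂ) * (Real.cos (π / 15) : ℂ) - (Real.cos (4 * π / 15) : ℂ) * (a1 : ℂ) := by
      exact_mod_cast congrArg (fun t : ℝ => (t : ℂ)) hb
    rw [hC, hB, e_def, e_def, hb']
    have him : (c4 : ℂ) * (Real.sin (π / 15) : ℂ) = (a1 : ℂ) * (Real.sin (4 * π / 15) : ℂ) := by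
      rw [ha1_def, hc4_def]
      push_cast
      ring
    linear_combination Complex.I * him
  have hAC : A - C = (c4 : ℂ) * e (π / 15 - π) := by
    rw [e_sub_pi]
    linear_combination -hCA
  have hBC : B - C = (a1 : ℂ) * e (4 * π / 15 - π) := by
    rw [e_sub_pi]
    linear_combination -hCB
  have hAB : A - B = (b5 : ℂ) * e π := by rw [e_pi, hA, hB]; ring
  have hA₁A : A₁ - A = (b5 : ℂ) * e (-(7 * π / 15)) := by rw [hA, hA₁]; ring
  have hB₁B : B₁ - B = (b5 : ℂ) * e (2 * π / 15) := by
    have h := two_cos_mul (π / 15)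
    have h15 : 2 * (π / 15) = 2 * π / 15 := by ring
    rw [h15] at h
    rw [hB₁, hB]
    push_cast at h ⊢
    linear_combination (b5 : ℂ) * h
  have hA₁B : A₁ - B = ((-2 * Real.sin (7 * π / 30) * b5 : ℝ) : ℂ) * e (4 * π / 15) := by
    have h := exp_neg_sub_one (7 * π / 30)
    have h1 : -(2 * (7 * π / 30)) = -(7 * π / 15) := by ring
    have h2 : π / 2 - 7 * π / 30 = 4 * π / 15 := by ring
    rw [h1, h2] at h
    rw [hA₁, hB]
    push_cast at h ⊢
    linear_combination (b5 : ℂ) * h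
  -- angle computations
  have ang1 : ∠ B A C = π / 15 := by
    rw [angle_eq, hBA, hCA, angle_smul_e hb5 hc4 (by linarith) (by linarith)]
    rw [abs_of_nonpos (by linarith)]; ring
  have ang2 : ∠ A C B = π / 5 := by
    rw [angle_eq, hAC, hBC, angle_smul_e hc4 ha1 (by linarith) (by linarith)]
    rw [abs_of_nonpos (by linarith)]; ring
  have ang3 : ∠ A B C = 11 * π / 15 := by
    rw [angle_eq, hAB, hCB, angle_smul_e hb5 ha1 (by linarith) (by linarith)]
    rw [abs_of_nonneg (by linarith)]; ring
  have ang4 : ∠ B A A₁ = 7 * π / 15 := by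
    rw [angle_eq, hBA, hA₁A, angle_smul_e hb5 hb5 (by linarith) (by linarith)]
    rw [abs_of_nonneg (by linarith)]; ring
  have ang5 : ∠ C A A₁ = 8 * π / 15 := by
    rw [angle_eq, hCA, hA₁A, angle_smul_e hc4 hb5 (by linarith) (by linarith)]
    rw [abs_of_nonneg (by linarith)]; ring
  have ang6 : ∠ A B B₁ = 13 * π / 15 := by
    rw [angle_eq, hAB, hB₁B, angle_smul_e hb5 hb5 (by linarith) (by linarith)]
    rw [abs_of_nonneg (by linarith)]; ring
  have ang7 : ∠ C B B₁ = 2 * π / 15 := by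
    rw [angle_eq, hCB, hB₁B, angle_smul_e ha1 hb5 (by linarith) (by linarith)]
    rw [abs_of_nonneg (by linarith)]; ring
  -- line memberships as lineMap equalities
  have memA₁ : A₁ = AffineMap.lineMap B C ((-2 * Real.sin (7 * π / 30) * b5) / a1) := by
    rw [AffineMap.lineMap_apply]
    have hv : ((-2 * Real.sin (7 * π / 30) * b5) / a1) • (C -ᵥ B) +ᵥ B
        = (((-2 * Real.sin (7 * π / 30) * b5) / a1 : ℝ) : ℂ) * (C - B) + B := by
      rw [Complex.real_smul]; rfl
    rw [hv, hCB, ← sub_eq_iff_eq_add, hA₁B]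
    push_cast
    have ha1C' : (a1 : ℂ) ≠ 0 := by exact_mod_cast ha1.ne'
    field_simp
  have memB₁ : B₁ = AffineMap.lineMap A C ((2 * Real.cos (π / 15) * b5) / c4) := by
    rw [AffineMap.lineMap_apply]
    have hv : ((2 * Real.cos (π / 15) * b5) / c4) • (C -ᵥ A) +ᵥ A
        = (((2 * Real.cos (π / 15) * b5) / c4 : ℝ) : ℂ) * (C - A) + A := by
      rw [Complex.real_smul]; rfl
    rw [hv, hCA, hA, hB₁]
    push_cast
    have hc4C' : (c4 : ℂ) ≠ 0 := by exact_mod_cast hc4.ne'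
    field_simp
    ring
  -- distances
  have dAB : dist A B = b5 := by
    rw [dist_eq_norm, hA, hB, zero_sub, norm_neg, Complex.norm_real, Real.norm_eq_abs]
    exact abs_of_pos hb5
  have dAA₁ : dist A A₁ = b5 := by
    rw [dist_eq_norm]
    have h : A - A₁ = -((b5 : ℂ) * e (-(7 * π / 15))) := by rw [hA, hA₁]; ring
    rw [h, norm_neg, norm_mul, norm_e, Complex.norm_real, Real.norm_eq_abs,
      abs_of_pos hb5, mul_one]
  have dBB₁ : dist B B₁ = b5 := by
    rw [dist_comm, dist_eq_norm, hB₁B, norm_mul, norm_e, Complex.norm_real,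
      Real.norm_eq_abs, abs_of_pos hb5, mul_one]
  -- affine independence
  have hindep : AffineIndependent ℝ ![A, B, C] := by
    rw [affineIndependent_iff_not_collinear_set]
    intro hcol
    rw [Set.insert_comm] at hcol
    rcases EuclideanGeometry.collinear_iff_eq_or_eq_or_angle_eq_zero_or_angle_eq_pi.mp hcol
      with h | h | h | h
    · rw [hA, hB] at h
      exact (by exact_mod_cast hb5.ne' : (b5 : ℂ) ≠ 0) h
    · rw [hA, hC] at h
      exact (mul_ne_zero hc4C (e_ne _)) h
    · rw [ang1] at h; linarith
    · rw [ang1] at h; linarith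
  -- transport to Pt
  set f : ℂ ≃ₗᵢ[ℝ] Pt := Complex.orthonormalBasisOneI.repr with hf
  set g : ℂ →ᵃⁱ[ℝ] Pt := f.toLinearIsometry.toAffineIsometry with hg
  refine ⟨g A, g B, g C, g A₁, g B₁, ?_, ?_, ?_, ?_, ?_, ?_, ?_, ?_, ?_, ?_⟩
  · have hcomp : (g ∘ ![A, B, C]) = ![g A, g B, g C] := by
      funext i; fin_cases i <;> rfl
    rw [← hcomp]
    exact hindep.map' g.toAffineMap g.injective
  · rwa [g.angle_map]
  · rwa [g.angle_map]
  · rwa [g.angle_map]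
  · rw [memA₁, show g (AffineMap.lineMap B C ((-2 * Real.sin (7 * π / 30) * b5) / a1))
        = AffineMap.lineMap (g B) (g C) ((-2 * Real.sin (7 * π / 30) * b5) / a1) from
        g.toAffineMap.apply_lineMap B C _]
    exact AffineMap.lineMap_mem_affineSpan_pair _ _ _
  · rw [g.angle_map, g.angle_map, ang4, ang5]; ring
  · rw [memB₁, show g (AffineMap.lineMap A C ((2 * Real.cos (π / 15) * b5) / c4))
        = AffineMap.lineMap (g A) (g C) ((2 * Real.cos (π / 15) * b5) / c4) from
        g.toAffineMap.apply_lineMap A C _]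
    exact AffineMap.lineMap_mem_affineSpan_pair _ _ _
  · rw [g.angle_map, g.angle_map, ang6, ang7]; ring
  · rw [g.dist_map, g.dist_map, dAA₁, dAB]
  · rw [g.dist_map, g.dist_map, dBB₁, dAB]
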